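/- arXiv:1605.00329 — 4 statements merged into one kernel-verified Lean document; each statement's English description precedes it below -/
import Mathlib

section
/- The maximum number of regions into which ℝ^d can be partitioned by n hyperplanes equals r(n,d) = ∑_{i=0}^{d} C(n,i); in particular, n hyperplanes in general position in ℝ^d determine exactly ∑_{i=0}^{d} C(n,i) regions. -/
open scoped RealInnerProductSpace

/-- `n` affine hyperplanes `⟪a i, x⟫ = b i` are in general position if every `k ≤ d` of
them have linearly independent normals (so they intersect in an affine subspace of
dimension `d - k`) together with a common point, and no `d + 1` of them share a point. -/
def GeneralPosition {d n : ℕ} (a : Fin n → EuclideanSpace ℝ (Fin d)) (b : Fin n → ℝ) : Prop :=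
  (∀ s : Finset (Fin n), s.card ≤ d →
      (LinearIndependent ℝ fun i : s => a i) ∧ ∃ x, ∀ i ∈ s, ⟪a i, x⟫ = b i) ∧
    ∀ s : Finset (Fin n), s.card = d + 1 → ¬∃ x, ∀ i ∈ s, ⟪a i, x⟫ = b i

namespace CountRegions

open Finset

variable {E : Type} [NormedAddCommGroup E] [InnerProductSpace ℝ E]

/-- `x` realizes the sign vector `σ` for the arrangement `(a, b)`. -/
def Rz {n : ℕ} (a : Fin n → E) (b : Fin n → ℝ) (σ : Fin n → Bool) (x : E) : Prop :=
  ∀ i, if σ i then b i < ⟪a i, x⟫ else ⟪a i, x⟫ < b i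

/-- The sign vector `σ` is realizable. -/
def Rzb {n : ℕ} (a : Fin n → E) (b : Fin n → ℝ) (σ : Fin n → Bool) : Prop :=
  ∃ x, Rz a b σ x

lemma Rz.ne {n : ℕ} {a : Fin n → E} {b : Fin n → ℝ} {σ : Fin n → Bool} {x : E}
    (h : Rz a b σ x) (i : Fin n) : ⟪a i, x⟫ ≠ b i := by
  have hi := h i
  cases hσ : σ i <;> rw [hσ] at hi <;> simp at hi
  · exact ne_of_lt hi
  · exact ne_of_gt hi

lemma Rz.sgn_eq {n : ℕ} {a : Fin n → E} {b : Fin n → ℝ} {σ : Fin n → Bool} {x : E}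
    (h : Rz a b σ x) : σ = fun i => decide (b i < ⟪a i, x⟫) := by
  funext i
  have hi := h i
  cases hσ : σ i <;> rw [hσ] at hi <;> simp at hi
  · simp [hi.not_gt]
  · simp [hi]

lemma exists_eps : ∀ {m : ℕ} (g c : Fin m → ℝ), (∀ i, g i ≠ 0) →
    ∃ ε > (0:ℝ), ∀ i, ε * |c i| < |g i| := by
  intro m
  induction m with
  | zero => exact fun g c _ => ⟨1, one_pos, fun i => i.elim0⟩
  | succ m ih =>
    intro g c h
    obtain ⟨ε, hε, hlt⟩ := ih (fun i => g i.succ) (fun i => c i.succ) (fun i => h i.succ)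
    have hg0 : 0 < |g 0| := abs_pos.mpr (h 0)
    have hc1 : 0 < |c 0| + 1 := by positivity
    refine ⟨min ε (|g 0| / (|c 0| + 1)), lt_min hε (by positivity), fun i => ?_⟩
    refine Fin.cases ?_ (fun j => ?_) i
    · calc min ε (|g 0| / (|c 0| + 1)) * |c 0| ≤ |g 0| / (|c 0| + 1) * |c 0| :=
            mul_le_mul_of_nonneg_right (min_le_right _ _) (abs_nonneg _)
        _ < |g 0| := by
            rw [div_mul_eq_mul_div, div_lt_iff₀ hc1]
            nlinarith [abs_nonneg (c 0)]
    · calc min ε (|g 0| / (|c 0| + 1)) * |c j.succ| ≤ ε * |c j.succ| :=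
            mul_le_mul_of_nonneg_right (min_le_left _ _) (abs_nonneg _)
        _ < |g j.succ| := hlt j

lemma rz_perturb {n : ℕ} {a : Fin n → E} {b : Fin n → ℝ} {σ : Fin n → Bool} (v : E) {x : E}
    (hx : Rz a b σ x) : ∃ ε > (0:ℝ), ∀ δ : ℝ, |δ| ≤ ε → Rz a b σ (x + δ • v) := by
  obtain ⟨ε, hε, hlt⟩ := exists_eps (fun i => ⟪a i, x⟫ - b i) (fun i => ⟪a i, v⟫)
    (fun i => sub_ne_zero.mpr (hx.ne i))
  refine ⟨ε, hε, fun δ hδ i => ?_⟩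
  have hke : ⟪a i, x + δ • v⟫ = ⟪a i, x⟫ + δ * ⟪a i, v⟫ := by
    rw [inner_add_right, real_inner_smul_right]
  have habs : |δ * ⟪a i, v⟫| < |⟪a i, x⟫ - b i| := by
    rw [abs_mul]
    calc |δ| * |⟪a i, v⟫| ≤ ε * |⟪a i, v⟫| := mul_le_mul_of_nonneg_right hδ (abs_nonneg _)
      _ < |⟪a i, x⟫ - b i| := hlt i
  have hi := hx i
  have habs' := abs_lt.mp habs
  cases hσ : σ i <;> simp only [hσ, Bool.false_eq_true, if_true, if_false] at hi ⊢ <;> rw [hke]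
  · rw [abs_of_neg (by linarith : ⟪a i, x⟫ - b i < 0)] at habs'
    have := neg_abs_le (δ * ⟪a i, v⟫)
    have := le_abs_self (δ * ⟪a i, v⟫)
    linarith [habs'.2]
  · rw [abs_of_pos (by linarith : 0 < ⟪a i, x⟫ - b i)] at habs'
    linarith [habs'.1]

lemma rz_ivt {n : ℕ} {a : Fin n → E} {b : Fin n → ℝ} {σ : Fin n → Bool} {v : E} {β : ℝ}
    {x y : E} (hx : Rz a b σ x) (hy : Rz a b σ y) (hvx : β < ⟪v, x⟫) (hvy : ⟪v, y⟫ < β) :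
    ∃ z, ⟪v, z⟫ = β ∧ Rz a b σ z := by
  set t : ℝ := (β - ⟪v, y⟫) / (⟪v, x⟫ - ⟪v, y⟫) with ht
  have hd : (0:ℝ) < ⟪v, x⟫ - ⟪v, y⟫ := by linarith
  have ht0 : 0 < t := div_pos (by linarith) hd
  have ht1 : t < 1 := (div_lt_one hd).mpr (by linarith)
  have htv : t * (⟪v, x⟫ - ⟪v, y⟫) = β - ⟪v, y⟫ := div_mul_cancel₀ _ hd.ne'
  refine ⟨y + t • (x - y), ?_, fun i => ?_⟩
  · rw [inner_add_right, real_inner_smul_right, inner_sub_right]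
    linarith
  · have hin : ⟪a i, y + t • (x - y)⟫ = ⟪a i, y⟫ + t * (⟪a i, x⟫ - ⟪a i, y⟫) := by
      rw [inner_add_right, real_inner_smul_right, inner_sub_right]
    have hxi := hx i
    have hyi := hy i
    cases hσ : σ i <;>
        simp only [hσ, Bool.false_eq_true, if_true, if_false] at hxi hyi ⊢ <;>
      rw [hin] <;> nlinarith


open Finset

lemma ncard_subtype {α : Type*} [Fintype α] (p : α → Prop) [DecidablePred p] :
    Nat.card {x // p x} = (Finset.univ.filter p).card := by
  rw [Nat.card_eq_fintype_card, Fintype.card_subtype]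

lemma pascal_sum (m d : ℕ) :
    ∑ i ∈ Finset.range (d + 1), (m + 1).choose i =
      ∑ i ∈ Finset.range (d + 1), m.choose i + ∑ i ∈ Finset.range d, m.choose i := by
  induction d with
  | zero => simp
  | succ d ih =>
    rw [Finset.sum_range_succ, ih, Finset.sum_range_succ (f := fun i => m.choose i) (n := d + 1),
      Finset.sum_range_succ (f := fun i => m.choose i) (n := d)]
    have : (m + 1).choose (d + 1) = m.choose d + m.choose (d + 1) :=
      Nat.choose_succ_succ m d
    omega

variable {E : Type} [NormedAddCommGroup E] [InnerProductSpace ℝ E]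

lemma main_count :
    ∀ (n : ℕ) {E : Type} [NormedAddCommGroup E] [InnerProductSpace ℝ E] [FiniteDimensional ℝ E]
      (a : Fin n → E) (b : Fin n → ℝ),
      (∀ i, a i = 0 → b i ≠ 0) →
      (∀ s : Finset (Fin n), (∀ i ∈ s, a i ≠ 0) → s.card ≤ Module.finrank ℝ E →
        (∀ g : Fin n → ℝ, ∑ i ∈ s, g i • a i = 0 → ∀ i ∈ s, g i = 0) ∧
          ∃ x, ∀ i ∈ s, ⟪a i, x⟫ = b i) →
      (∀ s : Finset (Fin n), (∀ i ∈ s, a i ≠ 0) → s.card = Module.finrank ℝ E + 1 →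
        ¬∃ x, ∀ i ∈ s, ⟪a i, x⟫ = b i) →
      Nat.card {σ : Fin n → Bool // Rzb a b σ} =
        ∑ i ∈ Finset.range (Module.finrank ℝ E + 1),
          Nat.choose (Nat.card {i : Fin n // a i ≠ 0}) i := by
  intro n
  induction n with
  | zero =>
    intro E _ _ _ a b _ _ _
    classical
    have hu : ∀ σ : Fin 0 → Bool, Rzb a b σ := fun σ => ⟨0, fun i => i.elim0⟩
    haveI : Unique {σ : Fin 0 → Bool // Rzb a b σ} :=
      ⟨⟨⟨fun i => i.elim0, hu _⟩⟩, fun p => Subtype.ext (funext fun i => i.elim0)⟩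
    rw [Nat.card_unique]
    have hfil : Nat.card {i : Fin 0 // a i ≠ 0} = 0 := by
      simp [Nat.card_eq_fintype_card]
    rw [hfil]
    rw [Finset.sum_eq_single_of_mem 0 (Finset.mem_range.mpr (Nat.succ_pos _))
      (fun i _ hi => Nat.choose_eq_zero_of_lt (Nat.pos_of_ne_zero hi))]
    simp
  | succ n ih =>
    intro E _ _ _ a b hz h1 h2
    classical
    set d := Module.finrank ℝ E with hdd
    set a' : Fin n → E := fun i => a i.succ with ha'
    set b' : Fin n → ℝ := fun i => b i.succ with hb'
    set semb : Fin n ↪ Fin (n + 1) := ⟨Fin.succ, Fin.succ_injective n⟩ with hsemb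
    -- transfers for the restricted arrangement
    have hz' : ∀ i, a' i = 0 → b' i ≠ 0 := fun i h => hz i.succ h
    have hmapne : ∀ (s' : Finset (Fin n)), (∀ i ∈ s', a' i ≠ 0) →
        ∀ j ∈ s'.map semb, a j ≠ 0 := by
      intro s' hne j hj
      obtain ⟨i, hi, rfl⟩ := Finset.mem_map.mp hj
      exact hne i hi
    have h1' : ∀ s' : Finset (Fin n), (∀ i ∈ s', a' i ≠ 0) → s'.card ≤ d →
        (∀ g : Fin n → ℝ, ∑ i ∈ s', g i • a' i = 0 → ∀ i ∈ s', g i = 0) ∧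
          ∃ x, ∀ i ∈ s', ⟪a' i, x⟫ = b' i := by
      intro s' hne hcard
      obtain ⟨hind, x, hx⟩ := h1 (s'.map semb) (hmapne s' hne)
        (by rw [Finset.card_map]; exact hcard)
      constructor
      · intro g hg i hi
        have hsum : ∑ j ∈ s'.map semb, (Fin.cases 0 g : Fin (n+1) → ℝ) j • a j = 0 := by
          rw [Finset.sum_map]
          simpa [hsemb] using hg
        have := hind (Fin.cases 0 g) hsum i.succ (Finset.mem_map_of_mem _ hi)
        simpa using this
      · exact ⟨x, fun i hi => hx i.succ (Finset.mem_map_of_mem _ hi)⟩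
    have h2' : ∀ s' : Finset (Fin n), (∀ i ∈ s', a' i ≠ 0) → s'.card = d + 1 →
        ¬∃ x, ∀ i ∈ s', ⟪a' i, x⟫ = b' i := by
      rintro s' hne hcard ⟨x, hx⟩
      exact h2 (s'.map semb) (hmapne s' hne) (by rw [Finset.card_map]; exact hcard)
        ⟨x, fun j hj => by
          obtain ⟨i, hi, rfl⟩ := Finset.mem_map.mp hj
          exact hx i hi⟩
    by_cases ha0 : a 0 = 0
    · -- degenerate first hyperplane: it is empty
      have hb0 : b 0 ≠ 0 := hz 0 ha0
      have restr : ∀ {σ : Fin (n+1) → Bool} {x : E}, Rz a b σ x →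
          Rz a' b' (fun i => σ i.succ) x := fun h i => h i.succ
      have hσ0 : ∀ {σ : Fin (n+1) → Bool} {x : E}, Rz a b σ x → σ 0 = decide (b 0 < 0) := by
        intro σ x h
        have h0 := h 0
        rw [ha0, inner_zero_left] at h0
        cases hs : σ 0 <;> simp only [hs, Bool.false_eq_true, if_true, if_false] at h0
        · simp [h0.not_gt]
        · simp [h0]
      have hcons : ∀ (σ' : Fin n → Bool) (x : E), Rz a' b' σ' x →
          Rz a b (Fin.cons (decide (b 0 < 0)) σ') x := by
        intro σ' x hx i
        refine Fin.cases ?_ (fun j => ?_) i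
        · rw [Fin.cons_zero, ha0, inner_zero_left]
          by_cases hb : b 0 < 0
          · simp [hb]
          · have : 0 < b 0 := lt_of_le_of_ne (not_lt.mp hb) (Ne.symm hb0)
            simp [hb, this]
        · have := hx j
          simpa using this
      have e : {σ : Fin (n+1) → Bool // Rzb a b σ} ≃ {σ' : Fin n → Bool // Rzb a' b' σ'} :=
        { toFun := fun p => ⟨fun i => p.1 i.succ, p.2.elim fun x hx => ⟨x, restr hx⟩⟩
          invFun := fun p => ⟨Fin.cons (decide (b 0 < 0)) p.1,
            p.2.elim fun x hx => ⟨x, hcons _ x hx⟩⟩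
          left_inv := by
            rintro ⟨σ, hσ⟩
            obtain ⟨x, hx⟩ := hσ
            apply Subtype.ext
            funext i
            refine Fin.cases ?_ (fun j => ?_) i
            · show (Fin.cons (decide (b 0 < 0)) (fun i => σ i.succ) : Fin (n+1) → Bool) 0 = σ 0
              rw [Fin.cons_zero, ← hσ0 hx]
            · show (Fin.cons (decide (b 0 < 0)) (fun i => σ i.succ) : Fin (n+1) → Bool) j.succ
                = σ j.succ
              rw [Fin.cons_succ]
          right_inv := by
            rintro ⟨σ', hσ'⟩
            apply Subtype.ext
            funext i
            show (Fin.cons (decide (b 0 < 0)) σ' : Fin (n+1) → Bool) i.succ = σ' i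
            rw [Fin.cons_succ] }
      rw [Nat.card_congr e, ih a' b' hz' h1' h2']
      congr 1
      rw [ncard_subtype (fun i : Fin (n+1) => a i ≠ 0), ncard_subtype (fun i : Fin n => a' i ≠ 0),
        Finset.card_filter, Finset.card_filter, Fin.sum_univ_succ]
      simp [ha0, ha']
    · -- the first hyperplane is a genuine hyperplane
      haveI : Nontrivial E := ⟨⟨a 0, 0, ha0⟩⟩
      have hd1 : 1 ≤ d := Module.finrank_pos
      obtain ⟨-, x0, hx0'⟩ := h1 {0} (by simpa using ha0) (by simpa using hd1)
      have hx0 : ⟪a 0, x0⟫ = b 0 := hx0' 0 (Finset.mem_singleton_self 0)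
      have hia : (0:ℝ) < ⟪a 0, a 0⟫ := by
        rw [real_inner_self_eq_norm_sq]
        exact pow_pos (norm_pos_iff.mpr ha0) 2
      have restr : ∀ {σ : Fin (n+1) → Bool} {x : E}, Rz a b σ x →
          Rz a' b' (fun i => σ i.succ) x := fun h i => h i.succ
      -- claim B : every realizable sign vector of the restricted arrangement extends
      have claimB : ∀ σ' : Fin n → Bool, Rzb a' b' σ' →
          ∃ s : Bool, Rzb a b (Fin.cons s σ') := by
        rintro σ' ⟨x, hx⟩
        rcases lt_trichotomy ⟪a 0, x⟫ (b 0) with h | h | h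
        · refine ⟨false, x, fun i => ?_⟩
          refine Fin.cases ?_ (fun j => ?_) i
          · simpa using h
          · simpa using hx j
        · obtain ⟨ε, hε, hp⟩ := rz_perturb (a 0) hx
          refine ⟨true, x + ε • a 0, fun i => ?_⟩
          refine Fin.cases ?_ (fun j => ?_) i
          · have : ⟪a 0, x + ε • a 0⟫ = b 0 + ε * ⟪a 0, a 0⟫ := by
              rw [inner_add_right, real_inner_smul_right, h]
            simp only [Fin.cons_zero, if_true]
            rw [this]
            nlinarith
          · simpa using hp ε (le_of_eq (abs_of_pos hε)) j
        · refine ⟨true, x, fun i => ?_⟩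
          refine Fin.cases ?_ (fun j => ?_) i
          · simpa using h
          · simpa using hx j
      -- claim C : both extensions are realizable iff σ' is realizable on the hyperplane
      have claimC : ∀ σ' : Fin n → Bool,
          (Rzb a b (Fin.cons true σ') ∧ Rzb a b (Fin.cons false σ')) ↔
            ∃ x, ⟪a 0, x⟫ = b 0 ∧ Rz a' b' σ' x := by
        intro σ'
        constructor
        · rintro ⟨⟨x, hx⟩, ⟨y, hy⟩⟩
          have hx0' : b 0 < ⟪a 0, x⟫ := by simpa using hx 0
          have hy0' : ⟪a 0, y⟫ < b 0 := by simpa using hy 0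
          have hx' : Rz a' b' σ' x := fun i => by simpa using hx i.succ
          have hy' : Rz a' b' σ' y := fun i => by simpa using hy i.succ
          obtain ⟨z, hz0, hzr⟩ := rz_ivt hx' hy' hx0' hy0'
          exact ⟨z, hz0, hzr⟩
        · rintro ⟨x, hxH, hx⟩
          obtain ⟨ε, hε, hp⟩ := rz_perturb (a 0) hx
          have hip : ∀ δ : ℝ, ⟪a 0, x + δ • a 0⟫ = b 0 + δ * ⟪a 0, a 0⟫ := fun δ => by
            rw [inner_add_right, real_inner_smul_right, hxH]
          constructor
          · refine ⟨x + ε • a 0, fun i => ?_⟩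
            refine Fin.cases ?_ (fun j => ?_) i
            · simp only [Fin.cons_zero, if_true]
              rw [hip]
              nlinarith
            · simpa using hp ε (le_of_eq (abs_of_pos hε)) j
          · refine ⟨x + (-ε) • a 0, fun i => ?_⟩
            refine Fin.cases ?_ (fun j => ?_) i
            · simp only [Fin.cons_zero, Bool.false_eq_true, if_false]
              rw [hip]
              nlinarith
            · exact by simpa using hp (-ε) (le_of_eq (by rw [abs_neg, abs_of_pos hε])) j
      -- Finset counting
      set A : Finset (Fin (n+1) → Bool) := Finset.univ.filter (Rzb a b) with hA
      set B : Finset (Fin n → Bool) := Finset.univ.filter (Rzb a' b') with hB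
      set C : Finset (Fin n → Bool) :=
        Finset.univ.filter (fun σ' => ∃ x, ⟪a 0, x⟫ = b 0 ∧ Rz a' b' σ' x) with hC
      have hCB : C ⊆ B := by
        intro σ' h
        rw [hC, Finset.mem_filter] at h
        obtain ⟨-, x, -, hx⟩ := h
        exact Finset.mem_filter.mpr ⟨Finset.mem_univ _, x, hx⟩
      have hAB : ∀ σ ∈ A, (fun i => σ i.succ) ∈ B := by
        intro σ h
        rw [hA, Finset.mem_filter] at h
        obtain ⟨-, x, hx⟩ := h
        exact Finset.mem_filter.mpr ⟨Finset.mem_univ _, x, restr hx⟩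
      have hfiber : ∀ σ' ∈ B,
          (A.filter (fun σ => (fun i => σ i.succ) = σ')).card = 1 + (if σ' ∈ C then 1 else 0) := by
        intro σ' hBmem
        have himg : A.filter (fun σ => (fun i => σ i.succ) = σ') =
            (Finset.univ.filter (fun s : Bool => Rzb a b (Fin.cons s σ'))).image
              (fun s => Fin.cons s σ') := by
          ext σ
          simp only [hA, Finset.mem_filter, Finset.mem_univ, true_and, Finset.mem_image]
          constructor
          · rintro ⟨hr, hrest⟩
            have hcons : σ = Fin.cons (σ 0) σ' := by
              funext i
              refine Fin.cases ?_ (fun j => ?_) i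
              · rw [Fin.cons_zero]
              · rw [Fin.cons_succ, ← congrFun hrest j]
            exact ⟨σ 0, by rwa [← hcons], hcons.symm⟩
          · rintro ⟨s, hs, rfl⟩
            exact ⟨hs, funext fun i => Fin.cons_succ _ _ i⟩
        have hinj : Function.Injective (fun s : Bool => (Fin.cons s σ' : Fin (n+1) → Bool)) := by
          intro s t h
          have := congrFun h 0
          simpa using this
        rw [himg, Finset.card_image_of_injective _ hinj]
        have hex : ∃ s, Rzb a b (Fin.cons s σ') := by
          apply claimB
          rw [hB, Finset.mem_filter] at hBmem
          exact hBmem.2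
        by_cases hCmem : σ' ∈ C
        · have hboth := (claimC σ').mpr (by
            rw [hC, Finset.mem_filter] at hCmem
            exact hCmem.2)
          have huniv : Finset.univ.filter (fun s : Bool => Rzb a b (Fin.cons s σ')) =
              Finset.univ := by
            ext s
            simp only [Finset.mem_filter, Finset.mem_univ, true_and, iff_true]
            cases s
            · exact hboth.2
            · exact hboth.1
          rw [huniv, if_pos hCmem]
          rfl
        · obtain ⟨s, hs⟩ := hex
          have hnot : ¬(Rzb a b (Fin.cons true σ') ∧ Rzb a b (Fin.cons false σ')) := by
            intro hh
            exact hCmem (by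
              rw [hC, Finset.mem_filter]
              exact ⟨Finset.mem_univ _, (claimC σ').mp hh⟩)
          have hsingle : Finset.univ.filter (fun s : Bool => Rzb a b (Fin.cons s σ')) = {s} := by
            ext t
            simp only [Finset.mem_filter, Finset.mem_univ, true_and, Finset.mem_singleton]
            constructor
            · intro ht
              by_contra hne
              have hts : ∀ s t : Bool, ¬t = s → (t = true ∧ s = false) ∨
                  (t = false ∧ s = true) := by decide
              rcases hts s t hne with ⟨ht1, hs1⟩ | ⟨ht1, hs1⟩
              · rw [ht1] at ht; rw [hs1] at hs; exact hnot ⟨ht, hs⟩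
              · rw [ht1] at ht; rw [hs1] at hs; exact hnot ⟨hs, ht⟩
            · rintro rfl
              exact hs
          rw [hsingle, if_neg hCmem]
          rfl
      have hcardA : A.card = B.card + C.card := by
        rw [Finset.card_eq_sum_card_fiberwise hAB, Finset.sum_congr rfl hfiber,
          Finset.sum_add_distrib, Finset.sum_const, smul_eq_mul, mul_one]
        congr 1
        rw [Finset.sum_ite_mem, Finset.sum_const, smul_eq_mul, mul_one,
          Finset.inter_eq_right.mpr hCB]
      -- relate Nat.card to A.card
      have hAcard : Nat.card {σ : Fin (n+1) → Bool // Rzb a b σ} = A.card := by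
        rw [ncard_subtype (Rzb a b), hA]
      set m' := Nat.card {i : Fin n // a' i ≠ 0} with hm'
      have hBcard : B.card = ∑ i ∈ Finset.range (d + 1), m'.choose i := by
        rw [hB, ← ncard_subtype (Rzb a' b')]
        exact ih a' b' hz' h1' h2'
      -- the induced arrangement on the hyperplane ⟪a 0, x⟫ = b 0
      set K : Submodule ℝ E := Submodule.span ℝ {a 0} with hK
      set at' : Fin n → ↥Kᗮ := fun i => Submodule.orthogonalProjection Kᗮ (a' i) with hat'
      set bt : Fin n → ℝ := fun i => b' i - ⟪a' i, x0⟫ with hbt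
      have hinner : ∀ (i : Fin n) (y : ↥Kᗮ), ⟪at' i, y⟫ = ⟪a' i, (y : E)⟫ := by
        intro i y
        have h0 := Submodule.starProjection_inner_eq_zero (𝕜 := ℝ) (K := Kᗮ) (a' i) (y : E) y.2
        rw [inner_sub_left] at h0
        rw [Submodule.coe_inner]
        exact (sub_eq_zero.mp h0).symm
      have hmemK : ∀ v : E, ⟪a 0, v⟫ = 0 → v ∈ Kᗮ := fun v hv =>
        Submodule.mem_orthogonal_singleton_iff_inner_right.mpr hv
      have hKy : ∀ y : ↥Kᗮ, ⟪a 0, (y : E)⟫ = 0 := fun y =>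
        Submodule.mem_orthogonal_singleton_iff_inner_right.mp y.2
      have hdecomp : ∀ v : E,
          ((Submodule.orthogonalProjection Kᗮ v : E)) = v - (Submodule.orthogonalProjection K v : E) :=
        fun v => eq_sub_of_add_eq' (Submodule.starProjection_add_starProjection_orthogonal (K := K) v)
      have hat_ne : ∀ {i : Fin n}, at' i ≠ 0 → a' i ≠ 0 := by
        intro i h h0
        apply h
        show Submodule.orthogonalProjection Kᗮ (a' i) = 0
        rw [h0, map_zero]
      have hprojzero : ∀ i : Fin n, at' i = 0 → ∃ c : ℝ, a' i = c • a 0 := by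
        intro i h
        have hval : (Submodule.orthogonalProjection Kᗮ (a' i) : E) = 0 := by
          rw [show Submodule.orthogonalProjection Kᗮ (a' i) = at' i from rfl, h, Submodule.coe_zero]
        rw [hdecomp] at hval
        have hmem : a' i ∈ K := by
          rw [eq_of_sub_eq_zero hval]
          exact (Submodule.orthogonalProjection K (a' i)).2
        obtain ⟨c, hc⟩ := Submodule.mem_span_singleton.mp hmem
        exact ⟨c, hc.symm⟩
      have hparzero : ∀ i : Fin n, a' i ≠ 0 → at' i = 0 →
          ∃ c : ℝ, c ≠ 0 ∧ a' i = c • a 0 := by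
        intro i hne h
        obtain ⟨c, hc⟩ := hprojzero i h
        refine ⟨c, fun h0 => hne ?_, hc⟩
        rw [hc, h0, zero_smul]
      have hpairne : ∀ i : Fin n, a' i ≠ 0 →
          ∀ j ∈ ({0, i.succ} : Finset (Fin (n+1))), a j ≠ 0 := by
        intro i hne j hj
        rcases Finset.mem_insert.mp hj with rfl | hj
        · exact ha0
        · rw [Finset.mem_singleton.mp hj]
          exact hne
      have hpaircard : ∀ i : Fin n, ({0, i.succ} : Finset (Fin (n+1))).card = 2 :=
        fun i => Finset.card_pair (Fin.succ_ne_zero i).symm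
      have hindep2 : 2 ≤ d → ∀ i : Fin n, a' i ≠ 0 → at' i ≠ 0 := by
        intro h2d i hne h0
        obtain ⟨c, hc0, hc⟩ := hparzero i hne h0
        obtain ⟨hind, -⟩ := h1 {0, i.succ} (hpairne i hne) (by rw [hpaircard i]; omega)
        have hsum : ∑ j ∈ ({0, i.succ} : Finset (Fin (n+1))),
            (if j = 0 then c else -1 : ℝ) • a j = 0 := by
          rw [Finset.sum_pair (Fin.succ_ne_zero i).symm]
          rw [if_pos rfl, if_neg (Fin.succ_ne_zero i)]
          show c • a 0 + (-1 : ℝ) • a' i = 0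
          rw [hc, neg_one_smul, add_neg_cancel]
        have := hind _ hsum i.succ (by simp)
        rw [if_neg (Fin.succ_ne_zero i)] at this
        norm_num at this
      have hzt : ∀ i, at' i = 0 → bt i ≠ 0 := by
        intro i h hbt0
        have hb2 : b' i - ⟪a' i, x0⟫ = 0 := hbt0
        by_cases hne : a' i = 0
        · refine hz' i hne ?_
          rw [hne, inner_zero_left] at hb2
          linarith
        · by_cases h2d : 2 ≤ d
          · exact hindep2 h2d i hne h
          · obtain ⟨c, hc0, hc⟩ := hparzero i hne h
            have h3 : ⟪a' i, x0⟫ = c * b 0 := by rw [hc, real_inner_smul_left, hx0]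
            refine h2 {0, i.succ} (hpairne i hne) (by rw [hpaircard i]; omega) ⟨x0, ?_⟩
            intro j hj
            rcases Finset.mem_insert.mp hj with rfl | hj
            · exact hx0
            · rw [Finset.mem_singleton.mp hj]
              show ⟪a' i, x0⟫ = b' i
              rw [h3]
              linarith
      have hnotmem : ∀ s' : Finset (Fin n), (0 : Fin (n+1)) ∉ s'.map semb := by
        intro s' h
        obtain ⟨i, -, hi⟩ := Finset.mem_map.mp h
        exact Fin.succ_ne_zero i hi
      have hins_card : ∀ s' : Finset (Fin n), (insert 0 (s'.map semb)).card = s'.card + 1 := by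
        intro s'
        rw [Finset.card_insert_of_notMem (hnotmem s'), Finset.card_map]
      have hins_ne : ∀ s' : Finset (Fin n), (∀ i ∈ s', at' i ≠ 0) →
          ∀ j ∈ insert 0 (s'.map semb), a j ≠ 0 := by
        intro s' hne j hj
        rcases Finset.mem_insert.mp hj with rfl | hj
        · exact ha0
        · obtain ⟨i, hi, rfl⟩ := Finset.mem_map.mp hj
          exact hat_ne (hne i hi)
      haveI hfact : Fact (Module.finrank ℝ E = (d - 1) + 1) := ⟨by omega⟩
      have hfr : Module.finrank ℝ ↥Kᗮ = d - 1 := Submodule.finrank_orthogonal_span_singleton ha0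
      have h1t : ∀ s' : Finset (Fin n), (∀ i ∈ s', at' i ≠ 0) →
          s'.card ≤ Module.finrank ℝ ↥Kᗮ →
          (∀ g : Fin n → ℝ, ∑ i ∈ s', g i • at' i = 0 → ∀ i ∈ s', g i = 0) ∧
            ∃ y : ↥Kᗮ, ∀ i ∈ s', ⟪at' i, y⟫ = bt i := by
        intro s' hne hcard
        rw [hfr] at hcard
        obtain ⟨hind, x, hx⟩ := h1 (insert 0 (s'.map semb)) (hins_ne s' hne)
          (by rw [hins_card]; omega)
        have hx00 : ⟪a 0, x⟫ = b 0 := hx 0 (Finset.mem_insert_self _ _)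
        have hxs : ∀ i ∈ s', ⟪a' i, x⟫ = b' i := fun i hi =>
          hx (semb i) (Finset.mem_insert_of_mem (Finset.mem_map_of_mem _ hi))
        constructor
        · intro g hg i hi
          have hgE : ∑ j ∈ s', g j • (at' j : E) = 0 := by
            have := congrArg (Subtype.val) hg
            push_cast at this
            exact this
          have hterm : ∀ j : Fin n, g j • (at' j : E) =
              g j • a' j - g j • (Submodule.orthogonalProjection K (a' j) : E) := by
            intro j
            rw [show ((at' j : E)) = (Submodule.orthogonalProjection Kᗮ (a' j) : E) from rfl,
              hdecomp (a' j), smul_sub]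
          have hgE2 : ∑ j ∈ s',
              (g j • a' j - g j • (Submodule.orthogonalProjection K (a' j) : E)) = 0 := by
            simp only [← hterm]
            exact hgE
          rw [Finset.sum_sub_distrib] at hgE2
          have hsub := sub_eq_zero.mp hgE2
          have hKmem : ∑ j ∈ s', g j • (Submodule.orthogonalProjection K (a' j) : E) ∈ K :=
            Submodule.sum_mem _ (fun j _ => Submodule.smul_mem _ _ (Submodule.orthogonalProjection K (a' j)).2)
          obtain ⟨t, ht⟩ := Submodule.mem_span_singleton.mp hKmem
          rw [← ht] at hsub
          have hsum0 : ∑ j ∈ insert 0 (s'.map semb),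
              (Fin.cons (-t) g : Fin (n+1) → ℝ) j • a j = 0 := by
            rw [Finset.sum_insert (hnotmem s'), Finset.sum_map]
            simp only [hsemb, Function.Embedding.coeFn_mk, Fin.cons_zero, Fin.cons_succ]
            show (-t) • a 0 + ∑ j ∈ s', g j • a' j = 0
            rw [hsub, neg_smul, neg_add_cancel]
          have := hind _ hsum0 (semb i) (Finset.mem_insert_of_mem (Finset.mem_map_of_mem _ hi))
          simpa [hsemb] using this
        · refine ⟨⟨x - x0, hmemK _ (by rw [inner_sub_right, hx00, hx0, sub_self])⟩,
            fun i hi => ?_⟩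
          rw [hinner]
          show ⟪a' i, x - x0⟫ = bt i
          rw [inner_sub_right, hxs i hi]
      have h2t : ∀ s' : Finset (Fin n), (∀ i ∈ s', at' i ≠ 0) →
          s'.card = Module.finrank ℝ ↥Kᗮ + 1 →
          ¬∃ y : ↥Kᗮ, ∀ i ∈ s', ⟪at' i, y⟫ = bt i := by
        rintro s' hne hcard ⟨y, hy⟩
        rw [hfr] at hcard
        refine h2 (insert 0 (s'.map semb)) (hins_ne s' hne) (by rw [hins_card s']; omega)
          ⟨x0 + (y : E), ?_⟩
        intro j hj
        rcases Finset.mem_insert.mp hj with rfl | hj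
        · rw [inner_add_right, hx0, hKy y, add_zero]
        · obtain ⟨i, hi, rfl⟩ := Finset.mem_map.mp hj
          show ⟪a' i, x0 + (y : E)⟫ = b' i
          have hyi := hy i hi
          rw [hinner] at hyi
          rw [inner_add_right, hyi]
          show ⟪a' i, x0⟫ + (b' i - ⟪a' i, x0⟫) = b' i
          ring
      have hiff : ∀ σ' : Fin n → Bool,
          (∃ x, ⟪a 0, x⟫ = b 0 ∧ Rz a' b' σ' x) ↔ Rzb at' bt σ' := by
        intro σ'
        constructor
        · rintro ⟨x, hxH, hx⟩
          have hy0 : x - x0 ∈ Kᗮ := hmemK _ (by rw [inner_sub_right, hxH, hx0, sub_self])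
          refine ⟨⟨x - x0, hy0⟩, fun i => ?_⟩
          have hi := hx i
          have hval : ⟪at' i, (⟨x - x0, hy0⟩ : ↥Kᗮ)⟫ = ⟪a' i, x⟫ - ⟪a' i, x0⟫ := by
            rw [hinner]
            exact inner_sub_right _ _ _
          cases hσ : σ' i
          · simp only [hσ, Bool.false_eq_true, if_false] at hi ⊢
            rw [hval]
            show ⟪a' i, x⟫ - ⟪a' i, x0⟫ < b' i - ⟪a' i, x0⟫
            linarith
          · simp only [hσ, if_true] at hi ⊢
            rw [hval]
            show b' i - ⟪a' i, x0⟫ < ⟪a' i, x⟫ - ⟪a' i, x0⟫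
            linarith
        · rintro ⟨y, hy⟩
          refine ⟨x0 + (y : E), by rw [inner_add_right, hx0, hKy y, add_zero], fun i => ?_⟩
          have hi := hy i
          have hval : ⟪a' i, x0 + (y : E)⟫ = ⟪a' i, x0⟫ + ⟪at' i, y⟫ := by
            rw [inner_add_right, hinner]
          cases hσ : σ' i
          · simp only [hσ, Bool.false_eq_true, if_false] at hi ⊢
            rw [hval]
            have hbtd : bt i = b' i - ⟪a' i, x0⟫ := rfl
            rw [hbtd] at hi
            linarith
          · simp only [hσ, if_true] at hi ⊢
            rw [hval]
            have hbtd : bt i = b' i - ⟪a' i, x0⟫ := rfl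
            rw [hbtd] at hi
            linarith
      have hCcard : C.card = ∑ i ∈ Finset.range ((d - 1) + 1),
          (Nat.card {i : Fin n // at' i ≠ 0}).choose i := by
        have hmc := ih at' bt hzt h1t h2t
        rw [hfr] at hmc
        rw [hC]
        have hfe : Finset.univ.filter (fun σ' => ∃ x, ⟪a 0, x⟫ = b 0 ∧ Rz a' b' σ' x)
            = Finset.univ.filter (Rzb at' bt) := by
          ext σ'
          simp only [Finset.mem_filter, Finset.mem_univ, true_and]
          exact hiff σ'
        rw [hfe, ← ncard_subtype (Rzb at' bt)]
        exact hmc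
      have hsum_eq : ∑ i ∈ Finset.range ((d - 1) + 1),
            (Nat.card {i : Fin n // at' i ≠ 0}).choose i
          = ∑ i ∈ Finset.range ((d - 1) + 1), m'.choose i := by
        by_cases h2d : 2 ≤ d
        · have hcongr : Nat.card {i : Fin n // at' i ≠ 0} = Nat.card {i : Fin n // a' i ≠ 0} :=
            Nat.card_congr (Equiv.subtypeEquivRight
              (fun i => ⟨fun h => hat_ne h, fun h => hindep2 h2d i h⟩))
          rw [hcongr, ← hm']
        · have hd1' : d - 1 = 0 := by omega
          rw [hd1']
          simp
      have hm : Nat.card {i : Fin (n+1) // a i ≠ 0} = m' + 1 := by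
        rw [ncard_subtype, hm', ncard_subtype, Finset.card_filter, Finset.card_filter,
          Fin.sum_univ_succ]
        simp only [ha', ne_eq]
        rw [if_pos ha0]
        omega
      rw [hAcard, hcardA, hBcard, hCcard, hsum_eq, hm]
      have hrw : (d - 1) + 1 = d := by omega
      rw [hrw]
      exact (pascal_sum m' d).symm
end CountRegions
open CountRegions in
theorem count_regions_of_hyperplane_arrangement {d n : ℕ}
    (a : Fin n → EuclideanSpace ℝ (Fin d)) (b : Fin n → ℝ) (ha : ∀ i, a i ≠ 0)
    (hgen : GeneralPosition a b) :
    Nat.card (ConnectedComponents {x : EuclideanSpace ℝ (Fin d) | ∀ i, ⟪a i, x⟫ ≠ b i}) =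
      ∑ i ∈ Finset.range (d + 1), n.choose i := by
  classical
  set U : Set (EuclideanSpace ℝ (Fin d)) := {x | ∀ i, ⟪a i, x⟫ ≠ b i} with hU
  -- the sign vector of a point of the complement
  have hsgnRz : ∀ x : U, Rz a b (fun i => decide (b i < ⟪a i, (x : EuclideanSpace ℝ (Fin d))⟫))
      (x : EuclideanSpace ℝ (Fin d)) := by
    intro x i
    split
    next hdec => exact of_decide_eq_true hdec
    next hdec =>
      have hnot : ¬(b i < ⟪a i, (x : EuclideanSpace ℝ (Fin d))⟫) :=
        fun hp => hdec (decide_eq_true hp)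
      exact lt_of_le_of_ne (not_lt.mp hnot) (x.2 i)
  set F : U → {σ : Fin n → Bool // Rzb a b σ} :=
    fun x => ⟨fun i => decide (b i < ⟪a i, (x : EuclideanSpace ℝ (Fin d))⟫), ⟨x, hsgnRz x⟩⟩
    with hF
  -- the (open, convex) cells
  set Cs : (Fin n → Bool) → Set (EuclideanSpace ℝ (Fin d)) := fun σ => {z | Rz a b σ z} with hCs
  have hCseq : ∀ σ, Cs σ =
      ⋂ i, {z : EuclideanSpace ℝ (Fin d) | if σ i then b i < ⟪a i, z⟫ else ⟪a i, z⟫ < b i} := by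
    intro σ
    ext z
    simp only [hCs, Set.mem_setOf_eq, Set.mem_iInter]
    rfl
  have hcellT : ∀ (σ : Fin n → Bool) (i : Fin n), σ i = true →
      {z : EuclideanSpace ℝ (Fin d) | if σ i then b i < ⟪a i, z⟫ else ⟪a i, z⟫ < b i} =
        {z : EuclideanSpace ℝ (Fin d) | b i < ⟪a i, z⟫} := by
    intro σ i h; ext z; simp [h]
  have hcellF : ∀ (σ : Fin n → Bool) (i : Fin n), σ i = false →
      {z : EuclideanSpace ℝ (Fin d) | if σ i then b i < ⟪a i, z⟫ else ⟪a i, z⟫ < b i} =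
        {z : EuclideanSpace ℝ (Fin d) | ⟪a i, z⟫ < b i} := by
    intro σ i h; ext z; simp [h]
  have hcont : ∀ i : Fin n, Continuous fun z : EuclideanSpace ℝ (Fin d) => ⟪a i, z⟫ :=
    fun i => continuous_const.inner continuous_id
  have hCsopen : ∀ σ, IsOpen (Cs σ) := by
    intro σ
    rw [hCseq σ]
    refine isOpen_iInter_of_finite (fun i => ?_)
    by_cases hσ : σ i = true
    · rw [hcellT σ i hσ]
      exact isOpen_lt continuous_const (hcont i)
    · rw [hcellF σ i (Bool.eq_false_iff.mpr hσ)]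
      exact isOpen_lt (hcont i) continuous_const
  have hCsconv : ∀ σ, Convex ℝ (Cs σ) := by
    intro σ
    rw [hCseq σ]
    refine convex_iInter (fun i => ?_)
    have hlin : IsLinearMap ℝ (fun z : EuclideanSpace ℝ (Fin d) => ⟪a i, z⟫) :=
      ⟨fun u v => inner_add_right _ _ _, fun c u => real_inner_smul_right _ _ _⟩
    by_cases hσ : σ i = true
    · rw [hcellT σ i hσ]
      exact convex_halfSpace_gt hlin (b i)
    · rw [hcellF σ i (Bool.eq_false_iff.mpr hσ)]
      exact convex_halfSpace_lt hlin (b i)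
  have hFunique : ∀ {σ : Fin n → Bool} {x : EuclideanSpace ℝ (Fin d)}, Rz a b σ x →
      (fun i => decide (b i < ⟪a i, x⟫)) = σ := fun h => (Rz.sgn_eq h).symm
  have hFcont : Continuous F := by
    apply IsLocallyConstant.continuous
    rw [IsLocallyConstant.iff_exists_open]
    intro x
    refine ⟨Subtype.val ⁻¹' Cs (F x).1, (hCsopen _).preimage continuous_subtype_val,
      hsgnRz x, ?_⟩
    intro y hy
    apply Subtype.ext
    show (fun i => decide (b i < ⟪a i, (y : EuclideanSpace ℝ (Fin d))⟫)) = (F x).1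
    exact hFunique hy
  have hFsurj : Function.Surjective F := by
    rintro ⟨σ, x, hx⟩
    have hxU : x ∈ U := fun i => Rz.ne hx i
    refine ⟨⟨x, hxU⟩, ?_⟩
    apply Subtype.ext
    show (fun i => decide (b i < ⟪a i, x⟫)) = σ
    exact hFunique hx
  set G := hFcont.connectedComponentsLift with hG
  have hGsurj : Function.Surjective G := by
    rintro y
    obtain ⟨x, rfl⟩ := hFsurj y
    exact ⟨ConnectedComponents.mk x, hFcont.connectedComponentsLift_apply_coe x⟩
  have hGinj : Function.Injective G := by
    intro c c'
    obtain ⟨x, rfl⟩ := ConnectedComponents.surjective_coe c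
    obtain ⟨y, rfl⟩ := ConnectedComponents.surjective_coe c'
    intro h
    rw [hG, hFcont.connectedComponentsLift_apply_coe,
      hFcont.connectedComponentsLift_apply_coe] at h
    have hσ : (F x).1 = (F y).1 := congrArg Subtype.val h
    have hxC : x ∈ (Subtype.val ⁻¹' Cs (F x).1 : Set U) := hsgnRz x
    have hyC : y ∈ (Subtype.val ⁻¹' Cs (F x).1 : Set U) := by
      show (y : EuclideanSpace ℝ (Fin d)) ∈ Cs (F x).1
      rw [hσ]
      exact hsgnRz y
    have hsub : Cs (F x).1 ⊆ U := fun z hz i => Rz.ne hz i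
    have hpre : IsPreconnected (Subtype.val ⁻¹' Cs (F x).1 : Set U) := by
      apply (Topology.IsInducing.subtypeVal).isPreconnected_image.mp
      rw [Subtype.image_preimage_coe, Set.inter_eq_right.mpr hsub]
      exact (hCsconv _).isPreconnected
    exact (ConnectedComponents.coe_eq_coe'.mpr
      (hpre.subset_connectedComponent hxC hyC)).symm.symm ▸ rfl
  have hcount : Nat.card (ConnectedComponents U) = Nat.card {σ : Fin n → Bool // Rzb a b σ} :=
    Nat.card_eq_of_bijective G ⟨hGinj, hGsurj⟩
  rw [hcount]
  -- apply the counting lemma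
  have hfin : Module.finrank ℝ (EuclideanSpace ℝ (Fin d)) = d := finrank_euclideanSpace_fin
  have hz : ∀ i, a i = 0 → b i ≠ 0 := fun i h => absurd h (ha i)
  have h1 : ∀ s : Finset (Fin n), (∀ i ∈ s, a i ≠ 0) →
      s.card ≤ Module.finrank ℝ (EuclideanSpace ℝ (Fin d)) →
      (∀ g : Fin n → ℝ, ∑ i ∈ s, g i • a i = 0 → ∀ i ∈ s, g i = 0) ∧
        ∃ x, ∀ i ∈ s, ⟪a i, x⟫ = b i := by
    intro s _ hcard
    rw [hfin] at hcard
    obtain ⟨hli, hpt⟩ := hgen.1 s hcard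
    refine ⟨?_, hpt⟩
    intro g hg i hi
    refine Fintype.linearIndependent_iff.mp hli (fun j => g j) ?_ ⟨i, hi⟩
    exact (Finset.sum_coe_sort s (fun j => g j • a j)).trans hg
  have h2 : ∀ s : Finset (Fin n), (∀ i ∈ s, a i ≠ 0) →
      s.card = Module.finrank ℝ (EuclideanSpace ℝ (Fin d)) + 1 →
      ¬∃ x, ∀ i ∈ s, ⟪a i, x⟫ = b i := by
    intro s _ hcard
    rw [hfin] at hcard
    exact hgen.2 s hcard
  have hmain := main_count n a b hz h1 h2
  have hcn : Nat.card {i : Fin n // a i ≠ 0} = n := by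
    rw [Nat.card_congr (Equiv.subtypeUnivEquiv ha), Nat.card_eq_fintype_card, Fintype.card_fin]
  rw [hfin, hcn] at hmain
  exact hmain
end

section
/- Let N be an ε-net of the unit sphere S^{d−1} in ℝ^d with ε ≤ 3/4 and d ≥ 2. Then |N| ≥ √(2π(d−1)/d) · ε^{1−d}. -/
open scoped Real
open Real MeasureTheory
open scoped RealInnerProductSpace

lemma gamma_step (x : ℝ) (hx : 0 < x) :
    Real.Gamma (x + 1) ≤ Real.sqrt (x + 1/2) * Real.Gamma (x + 1/2) := by
  have h1 : (0:ℝ) < x + 1/2 := by linarith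
  have h3 : (0:ℝ) < x + 3/2 := by linarith
  have hG1 : 0 < Real.Gamma (x + 1/2) := Real.Gamma_pos_of_pos h1
  have hG2 : 0 < Real.Gamma (x + 1) := Real.Gamma_pos_of_pos (by linarith)
  have hconv := Real.convexOn_log_Gamma.2 (Set.mem_Ioi.mpr h1) (Set.mem_Ioi.mpr h3)
    (by norm_num : (0:ℝ) ≤ 1/2) (by norm_num : (0:ℝ) ≤ 1/2) (by norm_num)
  have harg : (1/2 : ℝ) • (x + 1/2) + (1/2 : ℝ) • (x + 3/2) = x + 1 := by
    simp only [smul_eq_mul]; ring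
  rw [harg] at hconv
  simp only [Function.comp_apply, smul_eq_mul] at hconv
  have hG3 : Real.Gamma (x + 3/2) = (x + 1/2) * Real.Gamma (x + 1/2) := by
    have := Real.Gamma_add_one (ne_of_gt h1)
    rw [show x + 1/2 + 1 = x + 3/2 by ring] at this
    exact this
  rw [hG3, Real.log_mul (ne_of_gt h1) (ne_of_gt hG1)] at hconv
  have : Real.log (Real.Gamma (x+1)) ≤ Real.log (Real.sqrt (x + 1/2) * Real.Gamma (x + 1/2)) := by
    rw [Real.log_mul (ne_of_gt (Real.sqrt_pos.mpr h1)) (ne_of_gt hG1),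
      Real.log_sqrt (le_of_lt h1)]
    linarith
  calc Real.Gamma (x+1) = Real.exp (Real.log (Real.Gamma (x+1))) := (Real.exp_log hG2).symm
    _ ≤ Real.exp (Real.log (Real.sqrt (x + 1/2) * Real.Gamma (x + 1/2))) := Real.exp_le_exp.mpr this
    _ = _ := Real.exp_log (by positivity)


lemma pi_ball_vol (n : ℕ) (hn : 0 < n) (r : ℝ) (hr : 0 ≤ r) :
    volume {z : Fin n → ℝ | ∑ i, z i ^ 2 ≤ r ^ 2} =
      ENNReal.ofReal (r ^ n * (Real.sqrt π ^ n / Real.Gamma (n / 2 + 1))) := by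
  haveI : Nonempty (Fin n) := Fin.pos_iff_nonempty.mp hn
  have hmeas : NullMeasurableSet {z : Fin n → ℝ | ∑ i, z i ^ 2 ≤ r ^ 2} (volume) := by
    refine (IsClosed.measurableSet ?_).nullMeasurableSet
    exact isClosed_le (by continuity) continuous_const
  have hpre : (MeasurableEquiv.toLp 2 (Fin n → ℝ)).symm ⁻¹' {z : Fin n → ℝ | ∑ i, z i ^ 2 ≤ r ^ 2}
      = Metric.closedBall (0 : EuclideanSpace ℝ (Fin n)) r := by
    ext x
    simp only [Set.mem_preimage, Set.mem_setOf_eq, Metric.mem_closedBall, dist_zero_right]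
    have hx : (MeasurableEquiv.toLp 2 (Fin n → ℝ)).symm x = fun i => x i := rfl
    rw [hx, EuclideanSpace.norm_eq]
    simp only [Real.norm_eq_abs, sq_abs]
    rw [show r = Real.sqrt (r^2) by rw [Real.sqrt_sq hr]]
    rw [Real.sqrt_le_sqrt_iff (by positivity), Real.sqrt_sq hr]
  rw [← (EuclideanSpace.volume_preserving_symm_measurableEquiv_toLp (Fin n)).measure_preimage hmeas, hpre,
    EuclideanSpace.volume_closedBall]
  have hG : 0 < Real.Gamma ((n:ℝ) / 2 + 1) := Real.Gamma_pos_of_pos (by positivity)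
  rw [ENNReal.ofReal_mul (by positivity), ENNReal.ofReal_pow hr]
  simp [Fintype.card_fin]

set_option maxHeartbeats 2000000 in
lemma cone_vol {n : ℕ} (hn : 0 < n) {ε : ℝ} (hε0 : 0 < ε) (hε : ε ≤ 3/4)
    (y : EuclideanSpace ℝ (Fin (n+1))) (hy : ‖y‖ = 1) :
    volume {x : EuclideanSpace ℝ (Fin (n+1)) | ‖x‖ ≤ 1 ∧ (1 - ε^2/2) * ‖x‖ ≤ ⟪x, y⟫}
      ≤ ENNReal.ofReal ((ε^n/((n:ℝ)+1) + ε^(n+2)/((n:ℝ)+2)) *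
          (Real.sqrt π ^ n / Real.Gamma ((n:ℝ)/2+1))) := by
  have hG : 0 < Real.Gamma ((n:ℝ) / 2 + 1) := Real.Gamma_pos_of_pos (by positivity)
  set Cn : ℝ := Real.sqrt π ^ n / Real.Gamma ((n:ℝ)/2+1) with hCn
  have hCn0 : 0 ≤ Cn := by rw [hCn]; positivity
  clear_value Cn
  set c : ℝ := 1 - ε^2/2 with hc
  have hc0 : 0 < c := by rw [hc]; nlinarith
  have hc1 : c ≤ 1 := by rw [hc]; nlinarith
  clear_value c
  -- reduce to e = single 0 1
  set e : EuclideanSpace ℝ (Fin (n+1)) := EuclideanSpace.single 0 1 with he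
  have hne : ‖e‖ = 1 := by simp [he]
  set f := Submodule.reflection (Submodule.span ℝ {e - y})ᗮ with hf
  have hfe : f e = y := Submodule.reflection_sub (by rw [hne, hy])
  clear_value e f
  have hclosed : ∀ z : EuclideanSpace ℝ (Fin (n+1)),
      IsClosed {x : EuclideanSpace ℝ (Fin (n+1)) | ‖x‖ ≤ 1 ∧ c * ‖x‖ ≤ ⟪x, z⟫} := by
    intro z
    exact (isClosed_le continuous_norm continuous_const).inter
      (isClosed_le (continuous_const.mul continuous_norm) (continuous_id.inner continuous_const))
  have hstep1 : volume {x : EuclideanSpace ℝ (Fin (n+1)) | ‖x‖ ≤ 1 ∧ c * ‖x‖ ≤ ⟪x, y⟫}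
      = volume {x : EuclideanSpace ℝ (Fin (n+1)) | ‖x‖ ≤ 1 ∧ c * ‖x‖ ≤ ⟪x, e⟫} := by
    rw [← f.measurePreserving.measure_preimage
      ((hclosed y).measurableSet.nullMeasurableSet)]
    congr 1
    ext x
    simp only [Set.mem_preimage, Set.mem_setOf_eq, LinearIsometryEquiv.norm_map]
    rw [← hfe, LinearIsometryEquiv.inner_map_map]
  rw [hstep1]
  -- transfer to pi space then to ℝ × (Fin n → ℝ)
  set T : Set (ℝ × (Fin n → ℝ)) :=
    {p | Real.sqrt (p.1^2 + ∑ j, p.2 j ^ 2) ≤ 1 ∧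
         c * Real.sqrt (p.1^2 + ∑ j, p.2 j ^ 2) ≤ p.1} with hT
  have hTclosed : IsClosed T := by
    have hcont : Continuous fun p : ℝ × (Fin n → ℝ) =>
        Real.sqrt (p.1^2 + ∑ j, p.2 j ^ 2) := by
      apply Real.continuous_sqrt.comp
      exact (continuous_fst.pow 2).add
        (continuous_finset_sum _ fun j _ => ((continuous_apply j).comp continuous_snd).pow 2)
    exact (isClosed_le hcont continuous_const).inter
      (isClosed_le (continuous_const.mul hcont) continuous_fst)
  have hstep2 : volume {x : EuclideanSpace ℝ (Fin (n+1)) | ‖x‖ ≤ 1 ∧ c * ‖x‖ ≤ ⟪x, e⟫}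
      = volume T := by
    have h1 := (MeasurePreserving.symm _
      (EuclideanSpace.volume_preserving_symm_measurableEquiv_toLp (Fin (n+1)))).measure_preimage
      ((hclosed e).measurableSet.nullMeasurableSet)
    have h2 := (volume_preserving_piFinSuccAbove (fun _ : Fin (n+1) => ℝ) 0).measure_preimage
      (hTclosed.measurableSet.nullMeasurableSet)
    rw [← h1, ← h2]
    congr 1
    ext v
    have hv : ((MeasurableEquiv.toLp 2 (Fin (n+1) → ℝ)).symm.symm v : EuclideanSpace ℝ (Fin (n+1)))
        = WithLp.toLp 2 (fun i => v i) := rfl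
    have hnorm : ‖(MeasurableEquiv.toLp 2 (Fin (n+1) → ℝ)).symm.symm v‖
        = Real.sqrt ((v 0)^2 + ∑ j : Fin n, v j.succ ^ 2) := by
      rw [EuclideanSpace.norm_eq]
      congr 1
      rw [Fin.sum_univ_succ]
      simp [hv, sq_abs]
    have hinner : ⟪(MeasurableEquiv.toLp 2 (Fin (n+1) → ℝ)).symm.symm v, e⟫ = v 0 := by
      rw [he, EuclideanSpace.inner_single_right]
      simp [hv]
    have happ : (MeasurableEquiv.piFinSuccAbove (fun _ : Fin (n+1) => ℝ) 0) v
        = (v 0, fun j => v (Fin.succAbove 0 j)) := rfl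
    simp only [Set.mem_preimage, Set.mem_setOf_eq, hnorm, hinner, hT, happ, Fin.zero_succAbove]
  rw [hstep2]
  clear hstep2 hstep1 hfe hclosed hf hne he
  clear f e
  clear_value T
  -- split T into two pieces
  set k2 : ℝ := (1 - c^2)/c^2 with hk2
  have hk20 : 0 ≤ k2 := by
    rw [hk2]
    apply div_nonneg _ (by positivity)
    nlinarith
  clear_value k2
  set T1 : Set (ℝ × (Fin n → ℝ)) :=
    {p | 0 ≤ p.1 ∧ p.1 ≤ c ∧ ∑ j, p.2 j ^ 2 ≤ k2 * p.1^2} with hT1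
  set T2 : Set (ℝ × (Fin n → ℝ)) :=
    {p | c ≤ p.1 ∧ p.1 ≤ 1 ∧ ∑ j, p.2 j ^ 2 ≤ 2 * (1 - p.1)} with hT2
  clear_value T1 T2
  have hsub : T ⊆ T1 ∪ T2 := by
    rintro ⟨t, z⟩ hmem
    rw [hT] at hmem
    simp only [Set.mem_setOf_eq] at hmem
    obtain ⟨h1, h2⟩ := hmem
    have hs0 : 0 ≤ ∑ j, z j ^ 2 := by positivity
    set s : ℝ := ∑ j, z j ^ 2 with hs
    clear_value s
    have ht0 : 0 ≤ t := le_trans (by positivity) h2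
    have hX0 : 0 ≤ t^2 + s := by positivity
    have hsq : t^2 + s ≤ 1 := by
      have h1' := h1
      rw [show (1:ℝ) = Real.sqrt 1 by simp] at h1'
      exact (Real.sqrt_le_sqrt_iff zero_le_one).mp h1'
    have hsqrtsq : Real.sqrt (t^2+s) ^ 2 = t^2 + s := Real.sq_sqrt hX0
    have hsq2 : c^2 * (t^2 + s) ≤ t^2 := by
      have h3 : (c * Real.sqrt (t^2+s))^2 ≤ t^2 := by
        apply pow_le_pow_left₀ (by positivity) h2
      nlinarith [h3]
    have hk : s ≤ k2 * t^2 := by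
      rw [hk2, div_mul_eq_mul_div, le_div_iff₀ (by positivity)]
      nlinarith
    have ht1 : t ≤ 1 := by linarith [sq_nonneg (t-1), hsq, hs0]
    have hs2 : s ≤ 2*(1-t) := by linarith [sq_nonneg (1-t), hsq]
    rcases le_total t c with htc | htc
    · exact Or.inl (by rw [hT1]; exact ⟨ht0, htc, hs ▸ hk⟩)
    · exact Or.inr (by rw [hT2]; exact ⟨htc, ht1, hs ▸ hs2⟩)
  have hT1vol : volume T1 ≤ ENNReal.ofReal (ε^n/((n:ℝ)+1) * Cn) := by
    have hT1meas : MeasurableSet T1 := by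
      have hrw : T1 = (fun p : ℝ × (Fin n → ℝ) => p.1) ⁻¹' (Set.Icc 0 c)
          ∩ {p : ℝ × (Fin n → ℝ) | ∑ j, p.2 j ^ 2 ≤ k2 * p.1^2} := by
        ext p; simp [hT1, Set.mem_Icc, and_assoc]
      rw [hrw]
      refine (measurable_fst measurableSet_Icc).inter (measurableSet_le ?_ ?_)
      · exact Finset.measurable_sum _ fun j _ =>
          ((measurable_pi_apply j).comp measurable_snd).pow_const 2
      · exact (measurable_fst.pow_const 2).const_mul k2
    rw [Measure.volume_eq_prod, Measure.prod_apply hT1meas]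
    have hslice : ∀ t : ℝ, (volume (Prod.mk t ⁻¹' T1))
        = Set.indicator (Set.Icc 0 c) (fun t => ENNReal.ofReal ((Real.sqrt k2 * t)^n * Cn)) t := by
      intro t
      by_cases ht : t ∈ Set.Icc 0 c
      · rw [Set.indicator_of_mem ht]
        have : Prod.mk t ⁻¹' T1 = {z : Fin n → ℝ | ∑ j, z j ^ 2 ≤ (Real.sqrt k2 * t)^2} := by
          ext z
          simp only [Set.mem_preimage, hT1, Set.mem_setOf_eq, ht.1, ht.2, true_and]
          rw [mul_pow, Real.sq_sqrt hk20]
        rw [this, pi_ball_vol n hn _ (mul_nonneg (Real.sqrt_nonneg _) ht.1), hCn]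
      · rw [Set.indicator_of_notMem ht]
        have : Prod.mk t ⁻¹' T1 = ∅ := by
          ext z
          simp only [Set.mem_preimage, hT1, Set.mem_setOf_eq, Set.mem_empty_iff_false, iff_false]
          rintro ⟨h1, h2, -⟩
          exact ht ⟨h1, h2⟩
        rw [this, measure_empty]
    simp_rw [hslice]
    rw [lintegral_indicator measurableSet_Icc]
    have hIcont : Continuous fun t : ℝ => (Real.sqrt k2 * t)^n * Cn :=
      ((continuous_const.mul continuous_id).pow n).mul continuous_const
    rw [← ofReal_integral_eq_lintegral_ofReal (hIcont.integrableOn_Icc)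
      ((ae_restrict_iff' measurableSet_Icc).mpr (ae_of_all _ fun t ht => by
        have h0 : 0 ≤ t := ht.1
        show 0 ≤ (Real.sqrt k2 * t)^n * Cn
        positivity))]
    apply ENNReal.ofReal_le_ofReal
    rw [MeasureTheory.integral_Icc_eq_integral_Ioc, ← intervalIntegral.integral_of_le hc0.le]
    have : ∀ t : ℝ, (Real.sqrt k2 * t)^n * Cn = (Real.sqrt k2 ^n * Cn) * t^n := fun t => by
      rw [mul_pow]; ring
    simp_rw [this]
    rw [intervalIntegral.integral_const_mul, integral_pow]
    have hz : ((0:ℝ))^(n+1) = 0 := zero_pow (by omega)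
    rw [hz]
    have hkey : Real.sqrt k2 ^ n * c^(n+1) ≤ ε^n := by
      have h1 : Real.sqrt k2 * c = Real.sqrt (1 - c^2) := by
        rw [show Real.sqrt k2 * c = Real.sqrt k2 * Real.sqrt (c^2) by
          rw [Real.sqrt_sq hc0.le], ← Real.sqrt_mul hk20, hk2]
        congr 1
        field_simp
      have h2 : Real.sqrt (1 - c^2) ≤ ε := by
        rw [show ε = Real.sqrt (ε^2) by rw [Real.sqrt_sq hε0.le]]
        apply Real.sqrt_le_sqrt
        rw [hc]; nlinarith
      calc Real.sqrt k2 ^ n * c^(n+1) = (Real.sqrt k2 * c)^n * c := by rw [mul_pow]; ring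
        _ ≤ ε^n * 1 := by
            apply mul_le_mul _ hc1 hc0.le (by positivity)
            exact pow_le_pow_left₀ (by positivity) (h1 ▸ h2) n
        _ = ε^n := mul_one _
    calc Real.sqrt k2 ^ n * Cn * ((c ^ (n + 1) - 0) / ((n:ℝ) + 1))
        = (Real.sqrt k2 ^ n * c^(n+1)) * (Cn / ((n:ℝ)+1)) := by ring
      _ ≤ ε^n * (Cn / ((n:ℝ)+1)) := by
          apply mul_le_mul_of_nonneg_right hkey (by positivity)
      _ = ε^n/((n:ℝ)+1) * Cn := by ring
  have hT2vol : volume T2 ≤ ENNReal.ofReal (ε^(n+2)/((n:ℝ)+2) * Cn) := by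
    have hT2meas : MeasurableSet T2 := by
      have hrw : T2 = (fun p : ℝ × (Fin n → ℝ) => p.1) ⁻¹' (Set.Icc c 1)
          ∩ {p : ℝ × (Fin n → ℝ) | ∑ j, p.2 j ^ 2 ≤ 2 * (1 - p.1)} := by
        ext p; simp [hT2, Set.mem_Icc, and_assoc]
      rw [hrw]
      refine (measurable_fst measurableSet_Icc).inter (measurableSet_le ?_ ?_)
      · exact Finset.measurable_sum _ fun j _ =>
          ((measurable_pi_apply j).comp measurable_snd).pow_const 2
      · exact (measurable_const.sub measurable_fst).const_mul 2
    rw [Measure.volume_eq_prod, Measure.prod_apply hT2meas]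
    have hslice : ∀ t : ℝ, (volume (Prod.mk t ⁻¹' T2))
        = Set.indicator (Set.Icc c 1)
            (fun t => ENNReal.ofReal (Real.sqrt (2*(1-t))^n * Cn)) t := by
      intro t
      by_cases ht : t ∈ Set.Icc c 1
      · rw [Set.indicator_of_mem ht]
        have h2t : (0:ℝ) ≤ 2*(1-t) := by have := ht.2; linarith
        have : Prod.mk t ⁻¹' T2 = {z : Fin n → ℝ | ∑ j, z j ^ 2 ≤ (Real.sqrt (2*(1-t)))^2} := by
          ext z
          simp only [Set.mem_preimage, hT2, Set.mem_setOf_eq, ht.1, ht.2, true_and]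
          rw [Real.sq_sqrt h2t]
        rw [this, pi_ball_vol n hn _ (Real.sqrt_nonneg _), hCn]
      · rw [Set.indicator_of_notMem ht]
        have : Prod.mk t ⁻¹' T2 = ∅ := by
          ext z
          simp only [Set.mem_preimage, hT2, Set.mem_setOf_eq, Set.mem_empty_iff_false, iff_false]
          rintro ⟨h1, h2, -⟩
          exact ht ⟨h1, h2⟩
        rw [this, measure_empty]
    simp_rw [hslice]
    rw [lintegral_indicator measurableSet_Icc]
    have hIcont : Continuous fun t : ℝ => Real.sqrt (2*(1-t))^n * Cn := by
      apply Continuous.mul _ continuous_const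
      exact (Real.continuous_sqrt.comp (continuous_const.mul
        (continuous_const.sub continuous_id))).pow n
    rw [← ofReal_integral_eq_lintegral_ofReal (hIcont.integrableOn_Icc)
      ((ae_restrict_iff' measurableSet_Icc).mpr (ae_of_all _ fun t ht => by
        show 0 ≤ Real.sqrt (2*(1-t))^n * Cn
        positivity))]
    apply ENNReal.ofReal_le_ofReal
    rw [MeasureTheory.integral_Icc_eq_integral_Ioc, ← intervalIntegral.integral_of_le hc1]
    have hsplit : ∀ t : ℝ, Real.sqrt (2*(1-t))^n * Cn = Cn * Real.sqrt (2*(1-t))^n := fun t => by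
      ring
    simp_rw [hsplit]
    rw [intervalIntegral.integral_const_mul]
    have hcs : (∫ t in c..(1:ℝ), Real.sqrt (2*(1-t))^n)
        = ∫ u in (0:ℝ)..(1-c), Real.sqrt (2*u)^n := by
      have := intervalIntegral.integral_comp_sub_left (a := c) (b := 1)
        (fun u => Real.sqrt (2*u)^n) 1
      simpa using this
    rw [hcs]
    have h1c : 1 - c = ε^2/2 := by rw [hc]; ring
    have hval : (∫ u in (0:ℝ)..(1-c), Real.sqrt (2*u)^n) = ε^(n+2)/((n:ℝ)+2) := by
      have hg : ∀ w ∈ Set.uIcc (0:ℝ) ε, HasDerivAt (fun w : ℝ => w^2/2) w w := by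
        intro w _
        simpa using (hasDerivAt_pow 2 w).div_const 2
      have hfc : Continuous (fun u : ℝ => Real.sqrt (2*u)^n) :=
        (Real.continuous_sqrt.comp (continuous_const.mul continuous_id')).pow n
      have hsub := intervalIntegral.integral_comp_mul_deriv (g := fun u : ℝ => Real.sqrt (2*u)^n)
        (f' := fun w : ℝ => w) hg continuous_id'.continuousOn hfc
      rw [h1c]
      rw [show (0:ℝ)^2/2 = 0 by norm_num] at hsub
      rw [← hsub]
      have hcg : ∀ x ∈ Set.uIcc (0:ℝ) ε,
          ((fun u => Real.sqrt (2*u)^n) ∘ (fun w : ℝ => w^2/2)) x * x = x^(n+1) := by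
        intro x hx
        rw [Set.uIcc_of_le hε0.le] at hx
        simp only [Function.comp_apply]
        rw [show 2*(x^2/2) = x^2 by ring, Real.sqrt_sq hx.1, pow_succ]
      rw [intervalIntegral.integral_congr hcg, integral_pow,
        zero_pow (by omega : n+1+1 ≠ 0), sub_zero]
      push_cast
      ring_nf
    rw [hval]
    exact le_of_eq (by ring)
  calc volume T ≤ volume (T1 ∪ T2) := measure_mono hsub
    _ ≤ volume T1 + volume T2 := measure_union_le _ _
    _ ≤ ENNReal.ofReal (ε^n/((n:ℝ)+1) * Cn) + ENNReal.ofReal (ε^(n+2)/((n:ℝ)+2) * Cn) :=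
        add_le_add hT1vol hT2vol
    _ = ENNReal.ofReal ((ε^n/((n:ℝ)+1) + ε^(n+2)/((n:ℝ)+2)) * Cn) := by
        rw [← ENNReal.ofReal_add (by positivity) (by positivity)]
        congr 1
        ring

set_option maxHeartbeats 2000000 in
theorem epsilon_net_card_lower_bound {d : ℕ} (hd : 2 ≤ d) (ε : ℝ) (hε0 : 0 < ε)
    (hε : ε ≤ 3 / 4) (N : Finset (EuclideanSpace ℝ (Fin d)))
    (hN : ↑N ⊆ Metric.sphere (0 : EuclideanSpace ℝ (Fin d)) 1)
    (hnet : ∀ x ∈ Metric.sphere (0 : EuclideanSpace ℝ (Fin d)) 1, ∃ y ∈ N, dist x y ≤ ε) :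
    Real.sqrt (2 * π * (d - 1) / d) * ε ^ ((1 : ℝ) - d) ≤ N.card := by
  obtain ⟨n, rfl⟩ : ∃ n, d = n + 1 := ⟨d - 1, by omega⟩
  have hn : 0 < n := by omega
  have hnR : (1:ℝ) ≤ (n:ℝ) := by exact_mod_cast hn
  set c : ℝ := 1 - ε^2/2 with hc
  have hc0 : 0 < c := by rw [hc]; nlinarith
  clear_value c
  set C : EuclideanSpace ℝ (Fin (n+1)) → Set (EuclideanSpace ℝ (Fin (n+1))) :=
    fun y => {x | ‖x‖ ≤ 1 ∧ c * ‖x‖ ≤ ⟪x, y⟫} with hC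
  clear_value C
  have hsphere : EuclideanSpace.single (0 : Fin (n+1)) (1:ℝ) ∈
      Metric.sphere (0 : EuclideanSpace ℝ (Fin (n+1))) 1 := by
    rw [mem_sphere_zero_iff_norm, EuclideanSpace.norm_single, norm_one]
  obtain ⟨y₀, hy₀, -⟩ := hnet _ hsphere
  have hcover : Metric.closedBall (0 : EuclideanSpace ℝ (Fin (n+1))) 1 ⊆ ⋃ y ∈ N, C y := by
    intro x hx
    rw [Metric.mem_closedBall, dist_zero_right] at hx
    by_cases hx0 : x = 0
    · refine Set.mem_iUnion₂.mpr ⟨y₀, hy₀, ?_⟩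
      rw [hC, hx0]
      constructor <;> simp
    · have hxn : 0 < ‖x‖ := norm_pos_iff.mpr hx0
      set u := ‖x‖⁻¹ • x with hu
      clear_value u
      have hun : ‖u‖ = 1 := by
        rw [hu, norm_smul, norm_inv, norm_norm, inv_mul_cancel₀ (ne_of_gt hxn)]
      have husph : u ∈ Metric.sphere (0 : EuclideanSpace ℝ (Fin (n+1))) 1 := by
        rwa [mem_sphere_zero_iff_norm]
      obtain ⟨y, hyN, hyd⟩ := hnet u husph
      have hyn : ‖y‖ = 1 := by
        have := hN hyN
        rwa [mem_sphere_zero_iff_norm] at this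
      refine Set.mem_iUnion₂.mpr ⟨y, hyN, ?_⟩
      have hiuy : c ≤ ⟪u, y⟫ := by
        have h1 : ‖u - y‖ ≤ ε := by rwa [dist_eq_norm] at hyd
        have h2 : ‖u - y‖^2 ≤ ε^2 := pow_le_pow_left₀ (norm_nonneg _) h1 2
        rw [norm_sub_sq_real, hun, hyn] at h2
        rw [hc]; linarith
      rw [hC]
      refine ⟨hx, ?_⟩
      have hxu : x = ‖x‖ • u := by
        rw [hu, smul_smul, mul_inv_cancel₀ (ne_of_gt hxn), one_smul]
      have hinner : ⟪x, y⟫ = ‖x‖ * ⟪u, y⟫ := by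
        conv_lhs => rw [hxu]
        exact real_inner_smul_left _ _ _
      calc c * ‖x‖ ≤ ⟪u, y⟫ * ‖x‖ := mul_le_mul_of_nonneg_right hiuy (norm_nonneg _)
        _ = ⟪x, y⟫ := by rw [hinner]; ring
  have hG1 : 0 < Real.Gamma ((n:ℝ)/2+1) := Real.Gamma_pos_of_pos (by positivity)
  have hG2 : 0 < Real.Gamma (((n:ℝ)+1)/2+1) := Real.Gamma_pos_of_pos (by positivity)
  set q : ℝ := ε^n/((n:ℝ)+1) + ε^(n+2)/((n:ℝ)+2) with hq
  have hq0 : 0 < q := by rw [hq]; positivity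
  clear_value q
  set Cn : ℝ := Real.sqrt π ^ n / Real.Gamma ((n:ℝ)/2+1) with hCn
  have hCn0 : 0 < Cn := by rw [hCn]; positivity
  clear_value Cn
  have hvol : ENNReal.ofReal (Real.sqrt π ^ (n+1) / Real.Gamma (((n:ℝ)+1)/2+1))
      ≤ (N.card : ENNReal) * ENNReal.ofReal (q * Cn) := by
    have hball : volume (Metric.closedBall (0 : EuclideanSpace ℝ (Fin (n+1))) 1)
        = ENNReal.ofReal (Real.sqrt π ^ (n+1) / Real.Gamma (((n:ℝ)+1)/2+1)) := by
      rw [EuclideanSpace.volume_closedBall]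
      have hcast : ((Fintype.card (Fin (n+1)) : ℝ)) = (n:ℝ)+1 := by
        rw [Fintype.card_fin]; push_cast; ring
      rw [hcast, Fintype.card_fin, ENNReal.ofReal_one, one_pow, one_mul]
    calc ENNReal.ofReal (Real.sqrt π ^ (n+1) / Real.Gamma (((n:ℝ)+1)/2+1))
        = volume (Metric.closedBall (0 : EuclideanSpace ℝ (Fin (n+1))) 1) := hball.symm
      _ ≤ volume (⋃ y ∈ N, C y) := measure_mono hcover
      _ ≤ ∑ y ∈ N, volume (C y) := measure_biUnion_finset_le N C
      _ ≤ ∑ _y ∈ N, ENNReal.ofReal (q * Cn) := by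
          refine Finset.sum_le_sum fun y hy => ?_
          have hyn : ‖y‖ = 1 := by
            have := hN hy
            rwa [mem_sphere_zero_iff_norm] at this
          have := cone_vol hn hε0 hε y hyn
          rw [hC]
          simp only [hc]
          rw [hq, hCn]
          exact this
      _ = (N.card : ENNReal) * ENNReal.ofReal (q * Cn) := by
          rw [Finset.sum_const, nsmul_eq_mul]
  have hreal : Real.sqrt π ^ (n+1) / Real.Gamma (((n:ℝ)+1)/2+1) ≤ (N.card : ℝ) * (q * Cn) := by
    have h1 : (N.card : ENNReal) = ENNReal.ofReal (N.card : ℝ) := (ENNReal.ofReal_natCast _).symm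
    rw [h1, ← ENNReal.ofReal_mul (by positivity)] at hvol
    exact (ENNReal.ofReal_le_ofReal_iff (by positivity)).mp hvol
  -- final algebra
  push_cast
  rw [show (1:ℝ) - ((n:ℝ)+1) = -(n:ℝ) by ring, Real.rpow_neg hε0.le, Real.rpow_natCast,
    show 2*π*((n:ℝ)+1-1)/((n:ℝ)+1) = 2*π*(n:ℝ)/((n:ℝ)+1) by ring]
  have hεn : (0:ℝ) < ε^n := by positivity
  have hqCn : 0 < q * Cn := mul_pos hq0 hCn0
  have hq' : (ε^n)⁻¹ * q = 1/((n:ℝ)+1) + ε^2/((n:ℝ)+2) := by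
    have h1 : (ε:ℝ)^n ≠ 0 := ne_of_gt hεn
    have h2 : ((n:ℝ)+1) ≠ 0 := by positivity
    have h3 : ((n:ℝ)+2) ≠ 0 := by positivity
    rw [hq]; field_simp; ring
  have hgam := gamma_step (((n:ℝ)+1)/2) (by positivity)
  rw [show ((n:ℝ)+1)/2 + 1/2 = (n:ℝ)/2 + 1 by ring] at hgam
  set S : ℝ := Real.sqrt ((n:ℝ)/2+1) with hS
  have hS0 : 0 < S := by rw [hS]; exact Real.sqrt_pos.mpr (by positivity)
  clear_value S
  set Q'' : ℝ := 1/((n:ℝ)+1) + (9/16)/((n:ℝ)+2) with hQ''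
  have hQ''0 : 0 ≤ Q'' := by rw [hQ'']; positivity
  clear_value Q''
  set A : ℝ := Real.sqrt (2*π*(n:ℝ)/((n:ℝ)+1)) with hA
  have hA0 : 0 ≤ A := by rw [hA]; exact Real.sqrt_nonneg _
  clear_value A
  have hmain : A * Q'' * S ≤ Real.sqrt π := by
    have hAS : A * S = Real.sqrt (π*(n:ℝ)*((n:ℝ)+2)/((n:ℝ)+1)) := by
      rw [hA, hS, ← Real.sqrt_mul (by positivity)]
      congr 1
      field_simp
    have hW0 : (0:ℝ) ≤ π*(n:ℝ)*((n:ℝ)+2)/((n:ℝ)+1) := by positivity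
    have hpoly : π*(n:ℝ)*((n:ℝ)+2)/((n:ℝ)+1) * Q''^2 ≤ π := by
      have hQval : Q'' = (25*(n:ℝ)+41)/(16*((n:ℝ)+1)*((n:ℝ)+2)) := by
        rw [hQ'']; field_simp; ring
      rw [hQval, div_pow, div_mul_div_comm]
      rw [div_le_iff₀ (by positivity)]
      have hkey : (n:ℝ)*((n:ℝ)+2)*(25*(n:ℝ)+41)^2 ≤ ((n:ℝ)+1)*(16*((n:ℝ)+1)*((n:ℝ)+2))^2 := by
        have hfac : ((n:ℝ)+1)*(16*((n:ℝ)+1)*((n:ℝ)+2))^2 - (n:ℝ)*((n:ℝ)+2)*(25*(n:ℝ)+41)^2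
            = ((n:ℝ)+2)*(256*(n:ℝ)^4+655*(n:ℝ)^3+254*(n:ℝ)^2+111*(n:ℝ)+512) := by ring
        nlinarith [hfac, mul_nonneg (by positivity : (0:ℝ) ≤ (n:ℝ)+2)
          (by positivity : (0:ℝ) ≤ 256*(n:ℝ)^4+655*(n:ℝ)^3+254*(n:ℝ)^2+111*(n:ℝ)+512)]
      have hmul := mul_le_mul_of_nonneg_left hkey Real.pi_pos.le
      nlinarith [hmul]
    calc A * Q'' * S = A * S * Q'' := by ring
      _ = Real.sqrt (π*(n:ℝ)*((n:ℝ)+2)/((n:ℝ)+1) * Q''^2) := by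
          rw [Real.sqrt_mul hW0, Real.sqrt_sq hQ''0, hAS]
      _ ≤ Real.sqrt π := Real.sqrt_le_sqrt hpoly
  have hkey2 : A * (ε^n)⁻¹ * (q * Cn) ≤ Real.sqrt π ^ (n+1) / Real.Gamma (((n:ℝ)+1)/2+1) := by
    have hQ'le : (ε^n)⁻¹ * q ≤ Q'' := by
      rw [hq', hQ'']
      have : ε^2 ≤ 9/16 := by nlinarith
      gcongr
    have e1 : A * (ε^n)⁻¹ * (q * Cn) = (A * ((ε^n)⁻¹ * q)) * (Real.sqrt π ^ n) / Real.Gamma ((n:ℝ)/2+1) := by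
      rw [hCn]; field_simp
    rw [e1]
    have step1 : (A * ((ε^n)⁻¹ * q)) * (Real.sqrt π ^ n) / Real.Gamma ((n:ℝ)/2+1)
        ≤ (A * Q'') * (Real.sqrt π ^ n) / Real.Gamma ((n:ℝ)/2+1) := by
      gcongr
    refine le_trans step1 ?_
    have step2 : (A * Q'') * (Real.sqrt π ^ n) / Real.Gamma ((n:ℝ)/2+1)
        ≤ Real.sqrt π ^ (n+1) / (S * Real.Gamma ((n:ℝ)/2+1)) := by
      rw [div_le_div_iff₀ (by positivity) (by positivity)]
      calc A * Q'' * Real.sqrt π ^ n * (S * Real.Gamma ((n:ℝ)/2+1))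
          = (A * Q'' * S) * (Real.sqrt π ^ n * Real.Gamma ((n:ℝ)/2+1)) := by ring
        _ ≤ Real.sqrt π * (Real.sqrt π ^ n * Real.Gamma ((n:ℝ)/2+1)) :=
            mul_le_mul_of_nonneg_right hmain (by positivity)
        _ = Real.sqrt π ^ (n+1) * Real.Gamma ((n:ℝ)/2+1) := by rw [pow_succ]; ring
    refine le_trans step2 ?_
    apply div_le_div_of_nonneg_left (by positivity) hG2
    exact hgam
  have hfinal : A * (ε^n)⁻¹ * (q * Cn) ≤ (N.card : ℝ) * (q * Cn) := le_trans hkey2 hreal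
  exact le_of_mul_le_mul_right hfinal hqCn
end

section
/- Under the hypotheses of the Tverberg-type construction (odd d ≥ 3, full-spark A = [A₁,…,Aₙ], [A_i,A_j,b_i−b_j] full rank for i ≠ j), any affine hyperplane H = {x : ⟨a,x⟩ = β} that is disjoint from both S_i and S_j (i ≠ j) must intersect every S_k with k ≠ i,j. -/
open Matrix

/-- The columns of the concatenated matrix `[A₁, …, Aₙ]` are full spark:
every `d` of them are linearly independent. -/
def FullSpark {d n m : ℕ} (A : Fin n → Matrix (Fin d) (Fin m) ℝ) : Prop :=
  ∀ s : Finset (Fin n × Fin m), s.card = d →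
    LinearIndependent ℝ (fun p : s => fun k : Fin d => A p.1.1 k p.1.2)

lemma disjoint_vecMul_zero {d m : ℕ} (M : Matrix (Fin d) (Fin m) ℝ)
    (a c : Fin d → ℝ) (β : ℝ) (h : ∀ v : Fin m → ℝ, a ⬝ᵥ (M *ᵥ v + c) ≠ β) :
    a ᵥ* M = 0 := by
  by_contra hne
  obtain ⟨p, hp⟩ : ∃ p, (a ᵥ* M) p ≠ 0 := by
    by_contra h'; push_neg at h'; exact hne (funext h')
  apply h (Pi.single p ((β - a ⬝ᵥ c) / ((a ᵥ* M) p)))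
  rw [dotProduct_add, dotProduct_mulVec, dotProduct_single]
  field_simp
  ring


theorem tverberg_separating_hyperplane_meets_others {d m n : ℕ}
    (hd : Odd d) (hd3 : 3 ≤ d) (hm : m = (d - 1) / 2)
    (A : Fin n → Matrix (Fin d) (Fin m) ℝ) (b : Fin n → Fin d → ℝ)
    (hA : FullSpark A)
    (hrank : ∀ i j, i ≠ j →
      LinearIndependent ℝ
        (Sum.elim (fun p : Fin m => fun k : Fin d => A i k p)
          (Sum.elim (fun p : Fin m => fun k : Fin d => A j k p)
            (fun _ : Unit => b i - b j))))
    (a : Fin d → ℝ) (ha : a ≠ 0) (β : ℝ) (i j : Fin n) (hij : i ≠ j)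
    (hdisji : ∀ v : Fin m → ℝ, a ⬝ᵥ (A i *ᵥ v + b i) ≠ β)
    (hdisjj : ∀ v : Fin m → ℝ, a ⬝ᵥ (A j *ᵥ v + b j) ≠ β) :
    ∀ k, k ≠ i → k ≠ j → ∃ v : Fin m → ℝ, a ⬝ᵥ (A k *ᵥ v + b k) = β := by
  intro k hki hkj
  have hi : a ᵥ* A i = 0 := disjoint_vecMul_zero _ _ _ _ hdisji
  have hj : a ᵥ* A j = 0 := disjoint_vecMul_zero _ _ _ _ hdisjj
  have hk : a ᵥ* A k ≠ 0 := by
    intro hk0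
    -- a is orthogonal to all columns of A i, A j, A k, which include d linearly
    -- independent vectors spanning ℝ^d, so a = 0, contradiction.
    obtain ⟨r, hr⟩ := hd
    have hm' : m = r := by omega
    set s : Finset (Fin n × Fin m) := ({i, j, k} : Finset (Fin n)) ×ˢ Finset.univ with hs
    have hcard3 : ({i, j, k} : Finset (Fin n)).card = 3 := by
      rw [Finset.card_insert_of_notMem (by simp [hij, Ne.symm hki]),
        Finset.card_insert_of_notMem (by simp [Ne.symm hkj])]
      simp
    have hscard : s.card = 3 * m := by
      rw [hs, Finset.card_product, hcard3]; simp
    have hds : d ≤ s.card := by rw [hscard]; omega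
    obtain ⟨t, hts, htd⟩ := Finset.exists_subset_card_eq hds
    have hli := hA t htd
    have hspan : Submodule.span ℝ (Set.range (fun p : t => fun l : Fin d => A p.1.1 l p.1.2)) = ⊤ := by
      haveI : Nonempty t := Finset.Nonempty.to_subtype (Finset.card_pos.mp (by omega))
      apply hli.span_eq_top_of_card_eq_finrank
      simp [htd, Module.finrank_fintype_fun_eq_card]
    have horth : ∀ p : t, a ⬝ᵥ (fun l : Fin d => A p.1.1 l p.1.2) = 0 := by
      rintro ⟨⟨q, p⟩, hq⟩
      have hq' : q ∈ ({i, j, k} : Finset (Fin n)) := (Finset.mem_product.mp (hts hq)).1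
      simp only [Finset.mem_insert, Finset.mem_singleton] at hq'
      have key : a ᵥ* A q = 0 := by rcases hq' with rfl | rfl | rfl <;> assumption
      have := congrFun key p
      simpa [vecMul, dotProduct] using this
    -- the functional x ↦ a ⬝ᵥ x vanishes on a spanning set, hence is zero
    have hzero : ∀ x : Fin d → ℝ, a ⬝ᵥ x = 0 := by
      intro x
      have hx : x ∈ Submodule.span ℝ (Set.range (fun p : t => fun l : Fin d => A p.1.1 l p.1.2)) := by
        rw [hspan]; trivial
      induction hx using Submodule.span_induction with
      | mem y hy => obtain ⟨p, rfl⟩ := hy; exact horth p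
      | zero => simp
      | add y z _ _ hy hz => rw [dotProduct_add, hy, hz, add_zero]
      | smul c y _ hy => rw [dotProduct_smul, hy, smul_zero]
    apply ha
    ext l
    simpa using hzero (Pi.single l 1)
  obtain ⟨p, hp⟩ : ∃ p, (a ᵥ* A k) p ≠ 0 := by
    by_contra h'; push_neg at h'; exact hk (funext h')
  refine ⟨Pi.single p ((β - a ⬝ᵥ b k) / ((a ᵥ* A k) p)), ?_⟩
  rw [dotProduct_add, dotProduct_mulVec, dotProduct_single]
  field_simp
  ring
end

section
/- Any finite set of n ≥ 1 distinct points in ℝ^d can be separated by at most n − 1 hyperplanes, i.e., there exist at most n − 1 affine hyperplanes such that any two distinct points of the set are strictly separated by at least one of them. -/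
open scoped RealInnerProductSpace

private lemma aux_sep {d : ℕ} (a : EuclideanSpace ℝ (Fin d)) (ha : a ≠ 0) :
    ∀ n (S : Finset (EuclideanSpace ℝ (Fin d))), S.card = n →
    (∀ p ∈ S, ∀ q ∈ S, ⟪a, p⟫ = ⟪a, q⟫ → p = q) →
    ∃ H : Finset (EuclideanSpace ℝ (Fin d) × ℝ),
      H.card ≤ S.card - 1 ∧ (∀ h ∈ H, h.1 ≠ 0) ∧
        ∀ p ∈ S, ∀ q ∈ S, p ≠ q →
          ∃ h ∈ H, (⟪h.1, p⟫ < h.2 ∧ h.2 < ⟪h.1, q⟫) ∨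
            (⟪h.1, q⟫ < h.2 ∧ h.2 < ⟪h.1, p⟫) := by
  intro n
  induction n using Nat.strong_induction_on with
  | _ n ih =>
    intro S hcard hinj
    classical
    rcases le_or_gt S.card 1 with h1 | h1
    · refine ⟨∅, by simp, by simp, ?_⟩
      intro p hp q hq hpq
      exact absurd (Finset.card_le_one.mp h1 p hp q hq) hpq
    · -- S.card ≥ 2
      have hSne : S.Nonempty := Finset.card_pos.mp (by omega)
      set T := S.image (fun x => ⟪a, x⟫) with hT
      have hTne : T.Nonempty := hSne.image _
      obtain ⟨p₀, hp₀S, hp₀⟩ := Finset.mem_image.mp (T.max'_mem hTne)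
      set S' := S.erase p₀ with hS'
      have hS'card : S'.card = S.card - 1 := Finset.card_erase_of_mem hp₀S
      have hS'ne : S'.Nonempty := Finset.card_pos.mp (by omega)
      set T' := S'.image (fun x => ⟪a, x⟫) with hT'
      have hT'ne : T'.Nonempty := hS'ne.image _
      set m' := T'.max' hT'ne with hm'
      have hm'lt : m' < ⟪a, p₀⟫ := by
        obtain ⟨q, hqS', hq⟩ := Finset.mem_image.mp (T'.max'_mem hT'ne)
        rw [hm', ← hq]
        have hqS : q ∈ S := Finset.mem_of_mem_erase hqS'
        have hne : q ≠ p₀ := Finset.ne_of_mem_erase hqS'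
        have hle : ⟪a, q⟫ ≤ T.max' hTne :=
          T.le_max' _ (Finset.mem_image_of_mem _ hqS)
        rw [← hp₀] at hle
        rcases lt_or_eq_of_le hle with h | h
        · exact h
        · exact absurd (hinj q hqS p₀ hp₀S h) hne
      set β := (m' + ⟪a, p₀⟫) / 2 with hβ
      have hβ1 : m' < β := by rw [hβ]; linarith
      have hβ2 : β < ⟪a, p₀⟫ := by rw [hβ]; linarith
      obtain ⟨H', hH'card, hH'ne, hH'sep⟩ :=
        ih (S.card - 1) (by omega) S' hS'card
          (fun p hp q hq => hinj p (Finset.mem_of_mem_erase hp) q (Finset.mem_of_mem_erase hq))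
      refine ⟨insert (a, β) H', ?_, ?_, ?_⟩
      · calc (insert (a, β) H').card ≤ H'.card + 1 := Finset.card_insert_le _ _
          _ ≤ S'.card - 1 + 1 := by omega
          _ ≤ S.card - 1 := by omega
      · intro h hh
        rcases Finset.mem_insert.mp hh with h' | h'
        · rw [h']; exact ha
        · exact hH'ne h h'
      · intro p hp q hq hpq
        have key : ∀ r ∈ S', ⟪a, r⟫ < β := by
          intro r hr
          exact lt_of_le_of_lt (T'.le_max' _ (Finset.mem_image_of_mem _ hr)) hβ1
        by_cases hpp : p = p₀
        · have hq' : q ∈ S' := Finset.mem_erase.mpr ⟨hpp ▸ hpq.symm, hq⟩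
          exact ⟨(a, β), Finset.mem_insert_self _ _,
            Or.inr ⟨key q hq', hpp ▸ hβ2⟩⟩
        · by_cases hqq : q = p₀
          · have hp' : p ∈ S' := Finset.mem_erase.mpr ⟨hpp, hp⟩
            exact ⟨(a, β), Finset.mem_insert_self _ _,
              Or.inl ⟨key p hp', hqq ▸ hβ2⟩⟩
          · obtain ⟨h, hh, hsep⟩ := hH'sep p (Finset.mem_erase.mpr ⟨hpp, hp⟩)
              q (Finset.mem_erase.mpr ⟨hqq, hq⟩) hpq
            exact ⟨h, Finset.mem_insert_of_mem hh, hsep⟩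

theorem separate_points_with_card_sub_one_hyperplanes {d : ℕ}
    (S : Finset (EuclideanSpace ℝ (Fin d))) (hS : S.Nonempty) :
    ∃ H : Finset (EuclideanSpace ℝ (Fin d) × ℝ),
      H.card ≤ S.card - 1 ∧ (∀ h ∈ H, h.1 ≠ 0) ∧
        ∀ p ∈ S, ∀ q ∈ S, p ≠ q →
          ∃ h ∈ H, (⟪h.1, p⟫ < h.2 ∧ h.2 < ⟪h.1, q⟫) ∨
            (⟪h.1, q⟫ < h.2 ∧ h.2 < ⟪h.1, p⟫) := by
  rcases le_or_gt S.card 1 with h1 | h1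
  · refine ⟨∅, by simp, by simp, ?_⟩
    intro p hp q hq hpq
    exact absurd (Finset.card_le_one.mp h1 p hp q hq) hpq
  · -- find a with all inner products distinct
    have : ∃ a : EuclideanSpace ℝ (Fin d), a ≠ 0 ∧
        ∀ p ∈ S, ∀ q ∈ S, ⟪a, p⟫ = ⟪a, q⟫ → p = q := by
      by_contra hcon
      push_neg at hcon
      -- index: pairs of distinct points of S
      set ι := {pq : (↥S) × (↥S) // (pq.1 : EuclideanSpace ℝ (Fin d)) ≠ pq.2} with hι
      have : Finite ι := by infer_instance
      set P : ι → Subspace ℝ (EuclideanSpace ℝ (Fin d)) :=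
        fun i => LinearMap.ker (((innerSL ℝ) ((i.1.1 : EuclideanSpace ℝ (Fin d)) - i.1.2) : EuclideanSpace ℝ (Fin d) →L[ℝ] ℝ) : EuclideanSpace ℝ (Fin d) →ₗ[ℝ] ℝ)
      have hcover : ⋃ i, (P i : Set (EuclideanSpace ℝ (Fin d))) = Set.univ := by
        ext a
        simp only [Set.mem_iUnion, Set.mem_univ, iff_true]
        by_cases ha : a = 0
        · -- any index works since d must be ≥ 1? need some index exists; pick any pair
          obtain ⟨p, hp, q, hq, hne⟩ := Finset.one_lt_card.mp h1
          refine ⟨⟨(⟨p, hp⟩, ⟨q, hq⟩), hne⟩, ?_⟩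
          simp [P, ha]
        · obtain ⟨p, hp, q, hq, heq, hne⟩ := hcon a ha
          refine ⟨⟨(⟨p, hp⟩, ⟨q, hq⟩), hne⟩, ?_⟩
          simp only [P, SetLike.mem_coe, LinearMap.mem_ker, ContinuousLinearMap.coe_coe, innerSL_apply_apply, inner_sub_left]
          have h1 := real_inner_comm p a
          have h2 := real_inner_comm q a
          linarith
      obtain ⟨i, hi⟩ := Subspace.exists_eq_top_of_iUnion_eq_univ hcover
      have hne := i.2
      have hsub : (i.1.1 : EuclideanSpace ℝ (Fin d)) - i.1.2 ≠ 0 := sub_ne_zero.mpr hne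
      have : ((i.1.1 : EuclideanSpace ℝ (Fin d)) - i.1.2) ∈ P i := hi ▸ Submodule.mem_top
      simp only [P, LinearMap.mem_ker, ContinuousLinearMap.coe_coe, innerSL_apply_apply] at this
      exact hsub (inner_self_eq_zero.mp this)
    obtain ⟨a, ha, hinj⟩ := this
    exact aux_sep a ha S.card S rfl hinj
end
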